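/- The discrete Fréchet distance between two finite sequences is at least the Fréchet distance between the corresponding polygonal paths, and their difference is at most the maximal step length of either sequence: |d_discrete(a,b) − d_cont(â,b̂)| ≤ max(step(a), step(b)), where â, b̂ are the piecewise-linear interpolations and step(a) = max_i |a_{i+1} − a_i|. -/

import Mathlib

noncomputable section

open unitInterval

def IsFCoupling (L M N : ℕ) (μ ν : ℕ → ℕ) : Prop :=
  Monotone μ ∧ Monotone ν ∧ μ 0 = 0 ∧ ν 0 = 0 ∧ μ L = M ∧ ν L = N ∧
    ∀ k < L, μ (k + 1) ≤ μ k + 1 ∧ ν (k + 1) ≤ ν k + 1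

/-- The discrete Fréchet distance between `(a_0,…,a_M)` and `(b_0,…,b_N)`. -/
def dFrechet (M N : ℕ) (a b : ℕ → EuclideanSpace ℝ (Fin 2)) : ℝ :=
  sInf {r : ℝ | ∃ L μ ν, IsFCoupling L M N μ ν ∧
    r = (Finset.range (L + 1)).sup'
      (Finset.nonempty_range_iff.mpr (Nat.succ_ne_zero _))
      (fun k => dist (a (μ k)) (b (ν k)))}

def IsRepar (φ : unitInterval → unitInterval) : Prop :=
  Continuous φ ∧ Monotone φ ∧ Function.Surjective φ

/-- The continuous Fréchet-type path distance. -/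
def dPath (γ₁ γ₂ : unitInterval → EuclideanSpace ℝ (Fin 2)) : ℝ :=
  ⨅ φ : {p : (unitInterval → unitInterval) × (unitInterval → unitInterval) //
      IsRepar p.1 ∧ IsRepar p.2},
    ⨆ t : unitInterval, dist (γ₁ (φ.1.1 t)) (γ₂ (φ.1.2 t))

/-- The polygonal path through `a_0, …, a_M`, uniformly parameterized on `[0,1]`. -/
def polyPath (M : ℕ) (a : ℕ → EuclideanSpace ℝ (Fin 2)) :
    unitInterval → EuclideanSpace ℝ (Fin 2) := fun t =>
  (1 - ((t : ℝ) * M - ⌊(t : ℝ) * M⌋₊)) • a ⌊(t : ℝ) * M⌋₊ +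
    ((t : ℝ) * M - ⌊(t : ℝ) * M⌋₊) • a (⌊(t : ℝ) * M⌋₊ + 1)

namespace FrechetAux

/-! ### Clamp and piecewise-linear interpolation -/

def clamp (x : ℝ) : ℝ := min 1 (max 0 x)

lemma clamp_mono : Monotone clamp := fun _ _ h =>
  min_le_min le_rfl (max_le_max le_rfl h)

lemma continuous_clamp : Continuous clamp :=
  (continuous_const.min (continuous_const.max continuous_id))

lemma clamp_of_nonpos {x : ℝ} (h : x ≤ 0) : clamp x = 0 := by
  simp [clamp, max_eq_left h]

lemma clamp_of_one_le {x : ℝ} (h : 1 ≤ x) : clamp x = 1 := by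
  simp [clamp, min_eq_left, max_eq_right (le_trans zero_le_one h), h]

lemma clamp_of_mem {x : ℝ} (h0 : 0 ≤ x) (h1 : x ≤ 1) : clamp x = x := by
  simp [clamp, max_eq_right h0, min_eq_right h1]

def interp (L : ℕ) (c : ℕ → ℝ) (t : ℝ) : ℝ :=
  ∑ j ∈ Finset.range L, (c (j + 1) - c j) * clamp (t * L - j)

lemma interp_continuous (L : ℕ) (c : ℕ → ℝ) : Continuous (interp L c) := by
  apply continuous_finset_sum
  intro j _
  exact continuous_const.mul
    (continuous_clamp.comp ((continuous_id.mul continuous_const).sub continuous_const))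

lemma interp_monotone (L : ℕ) (c : ℕ → ℝ) (hc : Monotone c) : Monotone (interp L c) := by
  intro x y hxy
  apply Finset.sum_le_sum
  intro j _
  have h1 : clamp (x * L - j) ≤ clamp (y * L - j) :=
    clamp_mono (by nlinarith [Nat.cast_nonneg (α := ℝ) L])
  exact mul_le_mul_of_nonneg_left h1 (sub_nonneg.2 (hc (Nat.le_succ j)))

lemma interp_zero (L : ℕ) (c : ℕ → ℝ) : interp L c 0 = 0 := by
  apply Finset.sum_eq_zero
  intro j _
  rw [clamp_of_nonpos (by simp), mul_zero]

lemma interp_one (L : ℕ) (c : ℕ → ℝ) (hc0 : c 0 = 0) : interp L c 1 = c L := by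
  have : ∀ j ∈ Finset.range L, (c (j + 1) - c j) * clamp (1 * L - j) = c (j + 1) - c j := by
    intro j hj
    rw [clamp_of_one_le, mul_one]
    have := Finset.mem_range.1 hj
    have : (j : ℝ) + 1 ≤ L := by exact_mod_cast this
    linarith
  rw [interp, Finset.sum_congr rfl this, Finset.sum_range_sub, hc0, sub_zero]

lemma interp_eval (L : ℕ) (c : ℕ → ℝ) (hc0 : c 0 = 0) (t : ℝ) (k : ℕ) (hk : k < L)
    (hku : (k : ℝ) ≤ t * L) (hk1 : t * L ≤ k + 1) :
    interp L c t = (1 - (t * L - k)) * c k + (t * L - k) * c (k + 1) := by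
  rw [interp, ← Finset.sum_range_add_sum_Ico _ (Nat.succ_le_of_lt hk)]
  have h2 : ∑ j ∈ Finset.Ico (k + 1) L, (c (j + 1) - c j) * clamp (t * L - j) = 0 := by
    apply Finset.sum_eq_zero
    intro j hj
    have hj1 : (k : ℝ) + 1 ≤ j := by exact_mod_cast (Finset.mem_Ico.1 hj).1
    rw [clamp_of_nonpos (by linarith), mul_zero]
  rw [h2, add_zero, Finset.sum_range_succ]
  have h1 : ∑ j ∈ Finset.range k, (c (j + 1) - c j) * clamp (t * L - j) =
      ∑ j ∈ Finset.range k, (c (j + 1) - c j) := by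
    apply Finset.sum_congr rfl
    intro j hj
    have : (j : ℝ) + 1 ≤ k := by exact_mod_cast Finset.mem_range.1 hj
    rw [clamp_of_one_le (by linarith), mul_one]
  rw [h1, Finset.sum_range_sub, hc0, clamp_of_mem (by linarith) (by linarith)]
  ring

lemma interp_mem (L : ℕ) (c : ℕ → ℝ) (hc : Monotone c) (hc0 : c 0 = 0) (hcL : c L = 1)
    (t : ℝ) (ht0 : 0 ≤ t) (ht1 : t ≤ 1) : interp L c t ∈ unitInterval := by
  constructor
  · rw [← interp_zero L c]; exact interp_monotone L c hc ht0
  · rw [← hcL, ← interp_one L c hc0]; exact interp_monotone L c hc ht1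

def mkRepar (L : ℕ) (c : ℕ → ℝ) (hc : Monotone c) (hc0 : c 0 = 0) (hcL : c L = 1) :
    unitInterval → unitInterval := fun t =>
  ⟨interp L c t, interp_mem L c hc hc0 hcL t t.2.1 t.2.2⟩

lemma isRepar_mkRepar (L : ℕ) (c : ℕ → ℝ) (hc : Monotone c) (hc0 : c 0 = 0) (hcL : c L = 1) :
    IsRepar (mkRepar L c hc hc0 hcL) := by
  refine ⟨?_, ?_, ?_⟩
  · exact Continuous.subtype_mk ((interp_continuous L c).comp continuous_subtype_val) _
  · intro x y hxy
    exact interp_monotone L c hc hxy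
  · rintro ⟨y, hy0, hy1⟩
    have h : Set.Icc (interp L c 0) (interp L c 1) ⊆ interp L c '' Set.Icc 0 1 :=
      intermediate_value_Icc zero_le_one (interp_continuous L c).continuousOn
    rw [interp_zero, interp_one L c hc0, hcL] at h
    obtain ⟨x, hx, hxy⟩ := h ⟨hy0, hy1⟩
    exact ⟨⟨x, hx⟩, Subtype.ext hxy⟩

/-! ### Evaluations of `polyPath` -/

lemma polyPath_eq (M : ℕ) (a : ℕ → EuclideanSpace ℝ (Fin 2)) (x : unitInterval)
    (p : ℕ) (s : ℝ) (hs0 : 0 ≤ s) (hs1 : s < 1) (hpx : (x : ℝ) * M = p + s) :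
    polyPath M a x = (1 - s) • a p + s • a (p + 1) := by
  have hfl : ⌊(x : ℝ) * M⌋₊ = p := by
    rw [hpx, add_comm, Nat.floor_add_natCast hs0, Nat.floor_eq_zero.2 hs1, zero_add]
  show (1 - ((x : ℝ) * M - ⌊(x : ℝ) * M⌋₊)) • a ⌊(x : ℝ) * M⌋₊ +
      ((x : ℝ) * M - ⌊(x : ℝ) * M⌋₊) • a (⌊(x : ℝ) * M⌋₊ + 1) = _
  rw [hfl, hpx, add_sub_cancel_left]

lemma polyPath_combo (M : ℕ) (hM : 0 < M) (a : ℕ → EuclideanSpace ℝ (Fin 2))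
    (x : unitInterval) (p q : ℕ) (hq : q = p ∨ q = p + 1) (s : ℝ) (hs0 : 0 ≤ s) (hs1 : s < 1)
    (hx : (x : ℝ) = (1 - s) * ((p : ℝ) / M) + s * ((q : ℝ) / M)) :
    polyPath M a x = (1 - s) • a p + s • a q := by
  have hM0 : (M : ℝ) ≠ 0 := Nat.cast_ne_zero.2 hM.ne'
  rcases hq with h | h
  · subst h
    have hpx : (x : ℝ) * M = q + 0 := by
      rw [hx]; field_simp; ring
    rw [polyPath_eq M a x q 0 le_rfl one_pos hpx]
    simp only [sub_zero, one_smul, zero_smul, add_zero]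
    module
  · subst h
    have hpx : (x : ℝ) * M = p + s := by
      rw [hx]; field_simp; push_cast; ring
    exact polyPath_eq M a x p s hs0 hs1 hpx

lemma dist_combo (s : ℝ) (hs0 : 0 ≤ s) (hs1 : s ≤ 1) (x x' y y' : EuclideanSpace ℝ (Fin 2)) :
    dist ((1 - s) • x + s • x') ((1 - s) • y + s • y') ≤ max (dist x y) (dist x' y') := by
  calc dist ((1 - s) • x + s • x') ((1 - s) • y + s • y')
      ≤ dist ((1 - s) • x) ((1 - s) • y) + dist (s • x') (s • y') := dist_add_add_le _ _ _ _
    _ = (1 - s) * dist x y + s * dist x' y' := by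
        rw [dist_smul₀, dist_smul₀, Real.norm_of_nonneg (by linarith), Real.norm_of_nonneg hs0]
    _ ≤ (1 - s) * max (dist x y) (dist x' y') + s * max (dist x y) (dist x' y') :=
        add_le_add (mul_le_mul_of_nonneg_left (le_max_left _ _) (by linarith))
          (mul_le_mul_of_nonneg_left (le_max_right _ _) hs0)
    _ = max (dist x y) (dist x' y') := by ring

lemma polyPath_norm_le (M : ℕ) (a : ℕ → EuclideanSpace ℝ (Fin 2)) (x : unitInterval) :
    ‖polyPath M a x‖ ≤ (Finset.range (M + 2)).sup'
      (Finset.nonempty_range_iff.mpr (Nat.succ_ne_zero _)) (fun i => ‖a i‖) := by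
  set C := (Finset.range (M + 2)).sup'
      (Finset.nonempty_range_iff.mpr (Nat.succ_ne_zero _)) (fun i => ‖a i‖) with hC
  set m := ⌊(x : ℝ) * M⌋₊ with hm
  set s := (x : ℝ) * M - m with hs
  have hs0 : 0 ≤ s := sub_nonneg.2 (Nat.floor_le (mul_nonneg x.2.1 (Nat.cast_nonneg M)))
  have hs1 : s < 1 := by
    have := Nat.lt_floor_add_one ((x : ℝ) * M)
    simp only [hs]; linarith
  have hmM : m ≤ M := by
    have : (x : ℝ) * M ≤ M := by nlinarith [x.2.2, Nat.cast_nonneg (α := ℝ) M]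
    calc m ≤ ⌊(M : ℝ)⌋₊ := Nat.floor_le_floor this
      _ = M := Nat.floor_natCast M
  have h1 : ‖a m‖ ≤ C := Finset.le_sup' (fun i => ‖a i‖) (Finset.mem_range.2 (by omega))
  have h2 : ‖a (m + 1)‖ ≤ C := Finset.le_sup' (fun i => ‖a i‖) (Finset.mem_range.2 (by omega))
  show ‖(1 - s) • a m + s • a (m + 1)‖ ≤ C
  calc ‖(1 - s) • a m + s • a (m + 1)‖ ≤ ‖(1 - s) • a m‖ + ‖s • a (m + 1)‖ := norm_add_le _ _
    _ = (1 - s) * ‖a m‖ + s * ‖a (m + 1)‖ := by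
        rw [norm_smul, norm_smul, Real.norm_of_nonneg (by linarith), Real.norm_of_nonneg hs0]
    _ ≤ (1 - s) * C + s * C :=
        add_le_add (mul_le_mul_of_nonneg_left h1 (by linarith)) (mul_le_mul_of_nonneg_left h2 hs0)
    _ = C := by ring

lemma dist_round (M : ℕ) (hM : 0 < M) (a : ℕ → EuclideanSpace ℝ (Fin 2)) (x : unitInterval) :
    dist (a ⌊(x : ℝ) * M + 2⁻¹⌋₊) (polyPath M a x) ≤
      ((Finset.range M).sup' (Finset.nonempty_range_iff.mpr (Nat.pos_iff_ne_zero.mp hM))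
        (fun i => dist (a (i + 1)) (a i))) / 2 := by
  set S := (Finset.range M).sup' (Finset.nonempty_range_iff.mpr (Nat.pos_iff_ne_zero.mp hM))
    (fun i => dist (a (i + 1)) (a i)) with hS
  have hS0 : 0 ≤ S :=
    le_trans dist_nonneg (Finset.le_sup' (fun i => dist (a (i + 1)) (a i))
      (Finset.mem_range.2 hM))
  set m := ⌊(x : ℝ) * M⌋₊ with hm
  set s := (x : ℝ) * M - m with hs
  have hs0 : 0 ≤ s := sub_nonneg.2 (Nat.floor_le (mul_nonneg x.2.1 (Nat.cast_nonneg M)))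
  have hs1 : s < 1 := by
    have := Nat.lt_floor_add_one ((x : ℝ) * M)
    simp only [hs]; linarith
  have hxM : (x : ℝ) * M ≤ M := by nlinarith [x.2.2, Nat.cast_nonneg (α := ℝ) M]
  have hmM : m ≤ M := by
    calc m ≤ ⌊(M : ℝ)⌋₊ := Nat.floor_le_floor hxM
      _ = M := Nat.floor_natCast M
  have hpoly : polyPath M a x = (1 - s) • a m + s • a (m + 1) := rfl
  have hround : ⌊(x : ℝ) * M + 2⁻¹⌋₊ = m + ⌊s + 2⁻¹⌋₊ := by
    have h : (x : ℝ) * M + 2⁻¹ = (s + 2⁻¹) + m := by simp [hs]; ring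
    rw [h, Nat.floor_add_natCast (by linarith), add_comm]
  rcases lt_or_ge s 2⁻¹ with hcase | hcase
  · have h0 : ⌊s + 2⁻¹⌋₊ = 0 := Nat.floor_eq_zero.2 (by linarith)
    rw [hround, h0, add_zero, hpoly]
    have heq : a m - ((1 - s) • a m + s • a (m + 1)) = s • (a m - a (m + 1)) := by module
    rw [dist_eq_norm, heq, norm_smul, Real.norm_of_nonneg hs0, ← dist_eq_norm]
    rcases lt_or_ge m M with hmlt | hmge
    · have hd : dist (a m) (a (m + 1)) ≤ S := by
        rw [dist_comm]
        exact Finset.le_sup' (fun i => dist (a (i + 1)) (a i)) (Finset.mem_range.2 hmlt)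
      nlinarith [dist_nonneg (x := a m) (y := a (m + 1))]
    · have hmeq : m = M := le_antisymm hmM hmge
      have hs00 : s = 0 := by
        have h1 : (m : ℝ) ≤ (x : ℝ) * M := Nat.floor_le (mul_nonneg x.2.1 (Nat.cast_nonneg M))
        have hMm : ((M : ℕ) : ℝ) = (m : ℝ) := by rw [hmeq]
        simp only [hs]
        linarith [hxM, hMm ▸ h1]
      rw [hs00, zero_mul]
      linarith
  · have h1 : ⌊s + 2⁻¹⌋₊ = 1 := by
      rw [Nat.floor_eq_iff (by linarith)]
      constructor <;> push_cast <;> linarith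
    rw [hround, h1, hpoly]
    have heq : a (m + 1) - ((1 - s) • a m + s • a (m + 1)) = (1 - s) • (a (m + 1) - a m) := by
      module
    rw [dist_eq_norm, heq, norm_smul, Real.norm_of_nonneg (by linarith), ← dist_eq_norm]
    have hmlt : m < M := by
      rcases lt_or_ge m M with h | h
      · exact h
      · exfalso
        have h2 : (m : ℝ) ≤ (x : ℝ) * M := Nat.floor_le (mul_nonneg x.2.1 (Nat.cast_nonneg M))
        have h3 : (M : ℝ) ≤ (m : ℝ) := by exact_mod_cast h
        have : s ≤ 0 := by simp only [hs]; linarith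
        linarith
    have hd : dist (a (m + 1)) (a m) ≤ S :=
      Finset.le_sup' (fun i => dist (a (i + 1)) (a i)) (Finset.mem_range.2 hmlt)
    nlinarith [dist_nonneg (x := a (m + 1)) (y := a m)]

/-! ### Misc facts -/

lemma dF_nonempty (M N : ℕ) (a b : ℕ → EuclideanSpace ℝ (Fin 2)) :
    {r : ℝ | ∃ L μ ν, IsFCoupling L M N μ ν ∧
      r = (Finset.range (L + 1)).sup'
        (Finset.nonempty_range_iff.mpr (Nat.succ_ne_zero _))
        (fun k => dist (a (μ k)) (b (ν k)))}.Nonempty := by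
  refine ⟨_, M + N, fun k => min k M, fun k => k - M, ⟨?_, ?_, ?_, ?_, ?_, ?_, ?_⟩, rfl⟩
  · exact fun i j h => by simp only; omega
  · exact fun i j h => by simp only; omega
  · simp
  · simp
  · simp
  · simp
  · intro k _
    constructor <;> simp only <;> omega

lemma dF_bddBelow (M N : ℕ) (a b : ℕ → EuclideanSpace ℝ (Fin 2)) :
    BddBelow {r : ℝ | ∃ L μ ν, IsFCoupling L M N μ ν ∧
      r = (Finset.range (L + 1)).sup'
        (Finset.nonempty_range_iff.mpr (Nat.succ_ne_zero _))
        (fun k => dist (a (μ k)) (b (ν k)))} := by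
  refine ⟨0, ?_⟩
  rintro r ⟨L, μ, ν, hc, rfl⟩
  exact le_trans dist_nonneg (Finset.le_sup' (fun k => dist (a (μ k)) (b (ν k)))
    (Finset.mem_range.2 (Nat.succ_pos L)))

lemma repar_zero {φ : unitInterval → unitInterval} (hφ : IsRepar φ) : φ 0 = 0 := by
  obtain ⟨t, ht⟩ := hφ.2.2 0
  refine le_antisymm ?_ (Subtype.coe_le_coe.1 (φ 0).2.1)
  calc φ 0 ≤ φ t := hφ.2.1 (Subtype.coe_le_coe.1 t.2.1)
    _ = 0 := ht

lemma repar_one {φ : unitInterval → unitInterval} (hφ : IsRepar φ) : φ 1 = 1 := by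
  obtain ⟨t, ht⟩ := hφ.2.2 1
  refine le_antisymm (Subtype.coe_le_coe.1 (φ 1).2.2) ?_
  calc (1 : unitInterval) = φ t := ht.symm
    _ ≤ φ 1 := hφ.2.1 (Subtype.coe_le_coe.1 t.2.2)

instance : Nonempty {p : (unitInterval → unitInterval) × (unitInterval → unitInterval) //
    IsRepar p.1 ∧ IsRepar p.2} :=
  ⟨⟨(id, id), ⟨continuous_id, monotone_id, Function.surjective_id⟩,
    ⟨continuous_id, monotone_id, Function.surjective_id⟩⟩⟩

end FrechetAux

open FrechetAux

/-! ### Direction A : `dPath ≤ dFrechet` -/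

theorem dPath_le_dFrechet (M N : ℕ) (hM : 0 < M) (hN : 0 < N)
    (a b : ℕ → EuclideanSpace ℝ (Fin 2)) :
    dPath (polyPath M a) (polyPath N b) ≤ dFrechet M N a b := by
  apply le_csInf (dF_nonempty M N a b)
  rintro r ⟨L, μ, ν, ⟨hμm, hνm, hμ0, hν0, hμL, hνL, hstep⟩, rfl⟩
  have hL : 0 < L := by
    by_contra h
    push_neg at h
    interval_cases L
    omega
  have hM0 : (M : ℝ) ≠ 0 := Nat.cast_ne_zero.2 hM.ne'
  have hN0 : (N : ℝ) ≠ 0 := Nat.cast_ne_zero.2 hN.ne'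
  set cμ : ℕ → ℝ := fun k => (μ k : ℝ) / M with hcμ
  set cν : ℕ → ℝ := fun k => (ν k : ℝ) / N with hcν
  have hMpos : (0 : ℝ) < M := by exact_mod_cast hM
  have hNpos : (0 : ℝ) < N := by exact_mod_cast hN
  have hcμm : Monotone cμ := fun i j h =>
    (div_le_div_iff_of_pos_right hMpos).2 (by exact_mod_cast hμm h)
  have hcνm : Monotone cν := fun i j h =>
    (div_le_div_iff_of_pos_right hNpos).2 (by exact_mod_cast hνm h)
  have hcμ0 : cμ 0 = 0 := by simp [hcμ, hμ0]
  have hcν0 : cν 0 = 0 := by simp [hcν, hν0]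
  have hcμL : cμ L = 1 := by rw [hcμ]; simp only; rw [hμL, div_self hM0]
  have hcνL : cν L = 1 := by rw [hcν]; simp only; rw [hνL, div_self hN0]
  set φ := mkRepar L cμ hcμm hcμ0 hcμL with hφdef
  set ψ := mkRepar L cν hcνm hcν0 hcνL with hψdef
  refine le_trans (ciInf_le ⟨0, ?_⟩
    ⟨(φ, ψ), isRepar_mkRepar L cμ hcμm hcμ0 hcμL, isRepar_mkRepar L cν hcνm hcν0 hcνL⟩) ?_
  · rintro x ⟨p, rfl⟩
    exact Real.iSup_nonneg fun t => dist_nonneg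
  apply ciSup_le
  intro t
  have hLpos : (0 : ℝ) < L := by exact_mod_cast hL
  rcases eq_or_lt_of_le t.2.2 with ht1 | ht1
  · -- t = 1
    have hφt : (φ t : ℝ) = 1 := by
      show interp L cμ (t : ℝ) = 1
      rw [ht1, interp_one L cμ hcμ0, hcμL]
    have hψt : (ψ t : ℝ) = 1 := by
      show interp L cν (t : ℝ) = 1
      rw [ht1, interp_one L cν hcν0, hcνL]
    have hA : polyPath M a (φ t) = (1 - (0:ℝ)) • a M + (0:ℝ) • a (M + 1) :=
      polyPath_eq M a (φ t) M 0 le_rfl one_pos (by rw [hφt]; simp)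
    have hB : polyPath N b (ψ t) = (1 - (0:ℝ)) • b N + (0:ℝ) • b (N + 1) :=
      polyPath_eq N b (ψ t) N 0 le_rfl one_pos (by rw [hψt]; simp)
    simp only [sub_zero, one_smul, zero_smul, add_zero] at hA hB
    rw [hA, hB, ← hμL, ← hνL]
    exact Finset.le_sup' (fun k => dist (a (μ k)) (b (ν k)))
      (Finset.mem_range.2 (Nat.lt_succ_of_le le_rfl))
  · -- t < 1
    set u := (t : ℝ) * L with hu
    have hu0 : 0 ≤ u := mul_nonneg t.2.1 (le_of_lt hLpos)
    have huL : u < L := by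
      rw [hu]
      nlinarith
    set k := ⌊u⌋₊ with hk
    have hkL : k < L := (Nat.floor_lt hu0).2 huL
    set s := u - k with hs
    have hs0 : 0 ≤ s := sub_nonneg.2 (Nat.floor_le hu0)
    have hs1 : s < 1 := by
      have := Nat.lt_floor_add_one u
      simp only [hs]; linarith
    have hφt : (φ t : ℝ) = (1 - s) * cμ k + s * cμ (k + 1) :=
      interp_eval L cμ hcμ0 (t : ℝ) k hkL (Nat.floor_le hu0) (le_of_lt (Nat.lt_floor_add_one u))
    have hψt : (ψ t : ℝ) = (1 - s) * cν k + s * cν (k + 1) :=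
      interp_eval L cν hcν0 (t : ℝ) k hkL (Nat.floor_le hu0) (le_of_lt (Nat.lt_floor_add_one u))
    have hμq : μ (k + 1) = μ k ∨ μ (k + 1) = μ k + 1 := by
      have h1 := hμm (show k ≤ k + 1 by omega)
      have h2 := (hstep k hkL).1
      omega
    have hνq : ν (k + 1) = ν k ∨ ν (k + 1) = ν k + 1 := by
      have h1 := hνm (show k ≤ k + 1 by omega)
      have h2 := (hstep k hkL).2
      omega
    have hA : polyPath M a (φ t) = (1 - s) • a (μ k) + s • a (μ (k + 1)) :=
      polyPath_combo M hM a (φ t) (μ k) (μ (k + 1)) hμq s hs0 hs1 hφt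
    have hB : polyPath N b (ψ t) = (1 - s) • b (ν k) + s • b (ν (k + 1)) :=
      polyPath_combo N hN b (ψ t) (ν k) (ν (k + 1)) hνq s hs0 hs1 hψt
    rw [hA, hB]
    refine le_trans (dist_combo s hs0 hs1.le _ _ _ _) (max_le ?_ ?_)
    · exact Finset.le_sup' (fun k => dist (a (μ k)) (b (ν k)))
        (Finset.mem_range.2 (by omega))
    · exact Finset.le_sup' (fun k => dist (a (μ k)) (b (ν k)))
        (Finset.mem_range.2 (by omega))


/-! ### Direction B : `dFrechet ≤ dPath + step` -/

theorem dFrechet_le_dPath_add (M N : ℕ) (hM : 0 < M) (hN : 0 < N)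
    (a b : ℕ → EuclideanSpace ℝ (Fin 2)) :
    dFrechet M N a b ≤ dPath (polyPath M a) (polyPath N b) +
      max ((Finset.range M).sup'
            (Finset.nonempty_range_iff.mpr (Nat.pos_iff_ne_zero.mp hM))
            (fun i => dist (a (i + 1)) (a i)))
          ((Finset.range N).sup'
            (Finset.nonempty_range_iff.mpr (Nat.pos_iff_ne_zero.mp hN))
            (fun i => dist (b (i + 1)) (b i))) := by
  set SA := (Finset.range M).sup'
      (Finset.nonempty_range_iff.mpr (Nat.pos_iff_ne_zero.mp hM))
      (fun i => dist (a (i + 1)) (a i)) with hSA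
  set SB := (Finset.range N).sup'
      (Finset.nonempty_range_iff.mpr (Nat.pos_iff_ne_zero.mp hN))
      (fun i => dist (b (i + 1)) (b i)) with hSB
  rw [dPath, ← sub_le_iff_le_add]
  apply le_ciInf
  rintro ⟨⟨φ, ψ⟩, hφ, hψ⟩
  rw [sub_le_iff_le_add]
  simp only
  have hφ0 : φ 0 = 0 := repar_zero hφ
  have hψ0 : ψ 0 = 0 := repar_zero hψ
  have hφ1 : φ 1 = 1 := repar_one hφ
  have hψ1 : ψ 1 = 1 := repar_one hψ
  set L := 2 * (M + N) with hLdef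
  -- the interpolating times
  set H : ℝ → ℝ := fun r => (φ (Set.projIcc 0 1 zero_le_one r) : ℝ) * M +
      (ψ (Set.projIcc 0 1 zero_le_one r) : ℝ) * N with hHdef
  have hHcont : Continuous H := by
    have h1 : Continuous fun r : ℝ => (φ (Set.projIcc 0 1 zero_le_one r) : ℝ) :=
      continuous_subtype_val.comp (hφ.1.comp continuous_projIcc)
    have h2 : Continuous fun r : ℝ => (ψ (Set.projIcc 0 1 zero_le_one r) : ℝ) :=
      continuous_subtype_val.comp (hψ.1.comp continuous_projIcc)
    exact (h1.mul continuous_const).add (h2.mul continuous_const)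
  have hp0 : Set.projIcc (0:ℝ) 1 zero_le_one 0 = 0 := by
    apply Subtype.ext; simp [Set.projIcc]
  have hp1 : Set.projIcc (0:ℝ) 1 zero_le_one 1 = 1 := by
    apply Subtype.ext; simp [Set.projIcc]
  have hH0 : H 0 = 0 := by
    simp [hHdef, hp0, hφ0, hψ0]
  have hH1 : H 1 = M + N := by
    simp [hHdef, hp1, hφ1, hψ1]
  have key : ∀ k : ℕ, ∃ t : unitInterval,
      (φ t : ℝ) * M + (ψ t : ℝ) * N = ((min k L : ℕ) : ℝ) / 2 := by
    intro k
    have hv0 : (0:ℝ) ≤ ((min k L : ℕ) : ℝ) / 2 := by positivity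
    have hv1 : ((min k L : ℕ) : ℝ) / 2 ≤ (M : ℝ) + N := by
      have h1 : ((min k L : ℕ) : ℝ) ≤ (L : ℕ) := by exact_mod_cast min_le_right k L
      have h2 : ((L : ℕ) : ℝ) = 2 * ((M : ℝ) + N) := by rw [hLdef]; push_cast; ring
      linarith
    have hIVT := intermediate_value_Icc zero_le_one hHcont.continuousOn
    rw [hH0, hH1] at hIVT
    obtain ⟨r, _, hHr⟩ := hIVT ⟨hv0, hv1⟩
    exact ⟨Set.projIcc 0 1 zero_le_one r, hHr⟩
  set T : ℕ → unitInterval := fun k => (key k).choose with hTdef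
  have hT : ∀ k, (φ (T k) : ℝ) * M + (ψ (T k) : ℝ) * N = ((min k L : ℕ) : ℝ) / 2 :=
    fun k => (key k).choose_spec
  have hcoord : ∀ j k, j ≤ k →
      (φ (T j) : ℝ) * M ≤ (φ (T k) : ℝ) * M ∧ (ψ (T j) : ℝ) * N ≤ (ψ (T k) : ℝ) * N := by
    intro j k hjk
    have hmin : ((min j L : ℕ) : ℝ) ≤ ((min k L : ℕ) : ℝ) := by
      exact_mod_cast (by omega : min j L ≤ min k L)
    have hh : (φ (T j) : ℝ) * M + (ψ (T j) : ℝ) * N ≤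
        (φ (T k) : ℝ) * M + (ψ (T k) : ℝ) * N := by
      rw [hT, hT]; linarith
    rcases le_total (T j) (T k) with h | h
    · have h1 : (φ (T j) : ℝ) ≤ φ (T k) := Subtype.coe_le_coe.2 (hφ.2.1 h)
      have h2 : (ψ (T j) : ℝ) ≤ ψ (T k) := Subtype.coe_le_coe.2 (hψ.2.1 h)
      exact ⟨mul_le_mul_of_nonneg_right h1 (Nat.cast_nonneg M),
        mul_le_mul_of_nonneg_right h2 (Nat.cast_nonneg N)⟩
    · have h1 : (φ (T k) : ℝ) ≤ φ (T j) := Subtype.coe_le_coe.2 (hφ.2.1 h)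
      have h2 : (ψ (T k) : ℝ) ≤ ψ (T j) := Subtype.coe_le_coe.2 (hψ.2.1 h)
      have h1' := mul_le_mul_of_nonneg_right h1 (Nat.cast_nonneg (α := ℝ) M)
      have h2' := mul_le_mul_of_nonneg_right h2 (Nat.cast_nonneg (α := ℝ) N)
      constructor <;> linarith
  set μ : ℕ → ℕ := fun k => ⌊(φ (T k) : ℝ) * M + 2⁻¹⌋₊ with hμdef
  set ν : ℕ → ℕ := fun k => ⌊(ψ (T k) : ℝ) * N + 2⁻¹⌋₊ with hνdef
  have hcoup : IsFCoupling L M N μ ν := by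
    refine ⟨?_, ?_, ?_, ?_, ?_, ?_, ?_⟩
    · intro j k h
      exact Nat.floor_le_floor (by linarith [(hcoord j k h).1])
    · intro j k h
      exact Nat.floor_le_floor (by linarith [(hcoord j k h).2])
    · have h := hT 0
      simp only [Nat.zero_min, Nat.cast_zero, zero_div] at h
      have h1 : (0:ℝ) ≤ (φ (T 0) : ℝ) * M := mul_nonneg (φ (T 0)).2.1 (Nat.cast_nonneg M)
      have h2 : (0:ℝ) ≤ (ψ (T 0) : ℝ) * N := mul_nonneg (ψ (T 0)).2.1 (Nat.cast_nonneg N)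
      have h3 : (φ (T 0) : ℝ) * M = 0 := le_antisymm (by linarith) h1
      show ⌊(φ (T 0) : ℝ) * M + 2⁻¹⌋₊ = 0
      rw [h3, zero_add]
      exact Nat.floor_eq_zero.2 (by norm_num)
    · have h := hT 0
      simp only [Nat.zero_min, Nat.cast_zero, zero_div] at h
      have h1 : (0:ℝ) ≤ (φ (T 0) : ℝ) * M := mul_nonneg (φ (T 0)).2.1 (Nat.cast_nonneg M)
      have h2 : (0:ℝ) ≤ (ψ (T 0) : ℝ) * N := mul_nonneg (ψ (T 0)).2.1 (Nat.cast_nonneg N)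
      have h3 : (ψ (T 0) : ℝ) * N = 0 := le_antisymm (by linarith) h2
      show ⌊(ψ (T 0) : ℝ) * N + 2⁻¹⌋₊ = 0
      rw [h3, zero_add]
      exact Nat.floor_eq_zero.2 (by norm_num)
    · have h := hT L
      rw [min_self] at h
      have hLcast : ((L : ℕ) : ℝ) / 2 = (M : ℝ) + N := by rw [hLdef]; push_cast; ring
      rw [hLcast] at h
      have h1 : (φ (T L) : ℝ) * M ≤ M := by
        nlinarith [(φ (T L)).2.2, Nat.cast_nonneg (α := ℝ) M]
      have h2 : (ψ (T L) : ℝ) * N ≤ N := by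
        nlinarith [(ψ (T L)).2.2, Nat.cast_nonneg (α := ℝ) N]
      have h3 : (φ (T L) : ℝ) * M = M := by linarith
      show ⌊(φ (T L) : ℝ) * M + 2⁻¹⌋₊ = M
      rw [h3, add_comm, Nat.floor_add_natCast (by norm_num), Nat.floor_eq_zero.2 (by norm_num),
        zero_add]
    · have h := hT L
      rw [min_self] at h
      have hLcast : ((L : ℕ) : ℝ) / 2 = (M : ℝ) + N := by rw [hLdef]; push_cast; ring
      rw [hLcast] at h
      have h1 : (φ (T L) : ℝ) * M ≤ M := by
        nlinarith [(φ (T L)).2.2, Nat.cast_nonneg (α := ℝ) M]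
      have h2 : (ψ (T L) : ℝ) * N ≤ N := by
        nlinarith [(ψ (T L)).2.2, Nat.cast_nonneg (α := ℝ) N]
      have h3 : (ψ (T L) : ℝ) * N = N := by linarith
      show ⌊(ψ (T L) : ℝ) * N + 2⁻¹⌋₊ = N
      rw [h3, add_comm, Nat.floor_add_natCast (by norm_num), Nat.floor_eq_zero.2 (by norm_num),
        zero_add]
    · intro k hkL
      have e1 := hT k
      have e2 := hT (k + 1)
      rw [(by omega : min k L = k)] at e1
      rw [(by omega : min (k + 1) L = k + 1)] at e2
      have hcast : ((k + 1 : ℕ) : ℝ) / 2 = ((k : ℕ) : ℝ) / 2 + 2⁻¹ := by push_cast; ring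
      rw [hcast] at e2
      have hφmono := (hcoord k (k + 1) (by omega)).1
      have hψmono := (hcoord k (k + 1) (by omega)).2
      have hstepφ : (φ (T (k + 1)) : ℝ) * M ≤ (φ (T k) : ℝ) * M + 2⁻¹ := by linarith
      have hstepψ : (ψ (T (k + 1)) : ℝ) * N ≤ (ψ (T k) : ℝ) * N + 2⁻¹ := by linarith
      have hnn1 : (0:ℝ) ≤ (φ (T k) : ℝ) * M + 2⁻¹ :=
        add_nonneg (mul_nonneg (φ (T k)).2.1 (Nat.cast_nonneg M)) (by norm_num)
      have hnn2 : (0:ℝ) ≤ (ψ (T k) : ℝ) * N + 2⁻¹ :=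
        add_nonneg (mul_nonneg (ψ (T k)).2.1 (Nat.cast_nonneg N)) (by norm_num)
      constructor
      · calc μ (k + 1) = ⌊(φ (T (k + 1)) : ℝ) * M + 2⁻¹⌋₊ := rfl
          _ ≤ ⌊((φ (T k) : ℝ) * M + 2⁻¹) + 1⌋₊ := Nat.floor_le_floor (by linarith)
          _ = μ k + 1 := by rw [Nat.floor_add_one hnn1]
      · calc ν (k + 1) = ⌊(ψ (T (k + 1)) : ℝ) * N + 2⁻¹⌋₊ := rfl
          _ ≤ ⌊((ψ (T k) : ℝ) * N + 2⁻¹) + 1⌋₊ := Nat.floor_le_floor (by linarith)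
          _ = ν k + 1 := by rw [Nat.floor_add_one hnn2]
  refine le_trans (csInf_le (dF_bddBelow M N a b) ⟨L, μ, ν, hcoup, rfl⟩) ?_
  apply Finset.sup'_le
  intro k _
  have hbddS : BddAbove (Set.range fun t : unitInterval =>
      dist (polyPath M a (φ t)) (polyPath N b (ψ t))) := by
    refine ⟨(Finset.range (M + 2)).sup'
        (Finset.nonempty_range_iff.mpr (Nat.succ_ne_zero _)) (fun i => ‖a i‖) +
      (Finset.range (N + 2)).sup'
        (Finset.nonempty_range_iff.mpr (Nat.succ_ne_zero _)) (fun i => ‖b i‖), ?_⟩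
    rintro x ⟨t, rfl⟩
    show dist (polyPath M a (φ t)) (polyPath N b (ψ t)) ≤ _
    rw [dist_eq_norm]
    exact le_trans (norm_sub_le _ _)
      (add_le_add (polyPath_norm_le M a (φ t)) (polyPath_norm_le N b (ψ t)))
  have h2 : dist (polyPath M a (φ (T k))) (polyPath N b (ψ (T k))) ≤
      ⨆ t : unitInterval, dist (polyPath M a (φ t)) (polyPath N b (ψ t)) :=
    le_ciSup hbddS (T k)
  have h1 : dist (a (μ k)) (polyPath M a (φ (T k))) ≤ SA / 2 := dist_round M hM a (φ (T k))
  have h3 : dist (polyPath N b (ψ (T k))) (b (ν k)) ≤ SB / 2 := by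
    rw [dist_comm]
    exact dist_round N hN b (ψ (T k))
  have hSAle : SA ≤ max SA SB := le_max_left _ _
  have hSBle : SB ≤ max SA SB := le_max_right _ _
  calc dist (a (μ k)) (b (ν k)) ≤
      dist (a (μ k)) (polyPath M a (φ (T k))) +
        dist (polyPath M a (φ (T k))) (polyPath N b (ψ (T k))) +
        dist (polyPath N b (ψ (T k))) (b (ν k)) := dist_triangle4 _ _ _ _
    _ ≤ (⨆ t : unitInterval, dist (polyPath M a (φ t)) (polyPath N b (ψ t))) + max SA SB := by
        linarith

theorem dFrechet_vs_polygonal (M N : ℕ) (hM : 0 < M) (hN : 0 < N)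
    (a b : ℕ → EuclideanSpace ℝ (Fin 2)) :
    |dFrechet M N a b - dPath (polyPath M a) (polyPath N b)| ≤
      max ((Finset.range M).sup'
            (Finset.nonempty_range_iff.mpr (Nat.pos_iff_ne_zero.mp hM))
            (fun i => dist (a (i + 1)) (a i)))
          ((Finset.range N).sup'
            (Finset.nonempty_range_iff.mpr (Nat.pos_iff_ne_zero.mp hN))
            (fun i => dist (b (i + 1)) (b i))) := by
  have h1 := dPath_le_dFrechet M N hM hN a b
  have h2 := dFrechet_le_dPath_add M N hM hN a b
  have hSA0 : (0:ℝ) ≤ (Finset.range M).sup'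
      (Finset.nonempty_range_iff.mpr (Nat.pos_iff_ne_zero.mp hM))
      (fun i => dist (a (i + 1)) (a i)) :=
    le_trans dist_nonneg (Finset.le_sup' (fun i => dist (a (i + 1)) (a i))
      (Finset.mem_range.2 hM))
  have hS0 : (0:ℝ) ≤ max ((Finset.range M).sup'
      (Finset.nonempty_range_iff.mpr (Nat.pos_iff_ne_zero.mp hM))
      (fun i => dist (a (i + 1)) (a i)))
      ((Finset.range N).sup'
      (Finset.nonempty_range_iff.mpr (Nat.pos_iff_ne_zero.mp hN))
      (fun i => dist (b (i + 1)) (b i))) := le_trans hSA0 (le_max_left _ _)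
  rw [abs_le]
  constructor <;> linarith
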